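/- arXiv:0911.4076 — 3 statements merged into one kernel-verified Lean document; each statement's English description precedes it below -/
import Mathlib

section
/- At the point (α₀, 0), where α₀ = log(π/(1−π)), the partial derivatives of the expected negative logistic log-likelihood satisfy d₁₀(α₀, 0) = 0 and d₀₁(α₀, 0) = −π(1−π)μ, where d₁₀(α,β) = 1 − π − π·E[(1 + exp(α + βμ + βZ))⁻¹] − (1 − π)·E[(1 + exp(α + βZ))⁻¹] and d₀₁(α,β) = −π·E[(μ + Z)·(1 + exp(α + βμ + βZ))⁻¹] − (1 − π)·E[Z·(1 + exp(α + βZ))⁻¹]. -/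
open MeasureTheory Real

/-- At `(α₀, 0)` with `α₀ = log(π/(1−π))`, the partial derivatives of the
expected negative logistic log-likelihood satisfy `d₁₀(α₀,0) = 0` and
`d₀₁(α₀,0) = −π(1−π)μ`. -/
theorem expected_loglik_derivs_at_alpha0
    {Ω : Type*} [MeasurableSpace Ω] (P : Measure Ω) [IsProbabilityMeasure P]
    (Z : Ω → ℝ) (hZmeas : Measurable Z)
    (hZmom : Integrable (fun ω => (Z ω) ^ 4) P)
    (hZmean : ∫ ω, Z ω ∂P = 0)
    (p : ℝ) (hp : p ∈ Set.Ioo (0 : ℝ) 1) (μ : ℝ)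
    (α₀ : ℝ) (hα₀ : α₀ = Real.log (p / (1 - p))) :
    (1 - p
        - p * ∫ ω, (1 + Real.exp (α₀ + 0 * μ + 0 * Z ω))⁻¹ ∂P
        - (1 - p) * ∫ ω, (1 + Real.exp (α₀ + 0 * Z ω))⁻¹ ∂P) = 0
      ∧
    (-p * ∫ ω, (μ + Z ω) * (1 + Real.exp (α₀ + 0 * μ + 0 * Z ω))⁻¹ ∂P
        - (1 - p) * ∫ ω, Z ω * (1 + Real.exp (α₀ + 0 * Z ω))⁻¹ ∂P)
      = -p * (1 - p) * μ := by
  obtain ⟨hp0, hp1⟩ := hp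
  have h1p : (0:ℝ) < 1 - p := by linarith
  have hexp : Real.exp α₀ = p / (1 - p) := by
    rw [hα₀, Real.exp_log (by positivity)]
  have hinv : (1 + Real.exp α₀)⁻¹ = 1 - p := by
    rw [hexp]; field_simp; ring
  have hZint : Integrable Z P := by
    have hI : Integrable (fun ω => 1 + (Z ω) ^ 4) P := (integrable_const 1).add hZmom
    refine hI.mono hZmeas.aestronglyMeasurable (Filter.Eventually.of_forall fun ω => ?_)
    rw [Real.norm_eq_abs, Real.norm_eq_abs]
    have h4 : (0:ℝ) ≤ (Z ω) ^ 4 := by positivity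
    rw [abs_of_nonneg (show (0:ℝ) ≤ 1 + (Z ω) ^ 4 by linarith)]
    rcases le_or_gt (|Z ω|) 1 with h1 | h1
    · linarith
    · have h3 : |Z ω| ≤ |Z ω| ^ 4 := le_self_pow₀ h1.le (by norm_num)
      have h2 : |Z ω| ^ 4 = (Z ω) ^ 4 := by
        rw [← abs_pow]; exact abs_of_nonneg h4
      linarith
  simp only [zero_mul, add_zero, hinv]
  constructor
  · rw [integral_const, probReal_univ]
    simp only [ENNReal.toReal_one, smul_eq_mul, one_mul]
    ring
  · have h1 : ∫ ω, (μ + Z ω) * (1 - p) ∂P = (1 - p) * μ := by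
      rw [integral_mul_const, integral_add (integrable_const μ) hZint,
        integral_const, probReal_univ, hZmean]
      simp [mul_comm]
    have h2 : ∫ ω, Z ω * (1 - p) ∂P = 0 := by
      rw [integral_mul_const, hZmean, zero_mul]
    rw [h1, h2]
    ring
end

section
/- For every C > 0 there exist constants K > 0 and β₀ ∈ (0,1] such that for all α, μ with |α| ≤ C, |μ| ≤ C and all β with |β| ≤ β₀, writing ρ = e^α/(1 + e^α), one has |E[(1 + exp(α + β(μ + Z)))⁻¹] − (1 − ρ)·{1 − ρβμ + ρ(ρ − ½)β²(μ² + E(Z²))}| ≤ K|β|³. -/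
open MeasureTheory Real
noncomputable def sfun (α t : ℝ) : ℝ := (1 + Real.exp (α + t))⁻¹
lemma one_add_exp_pos (x : ℝ) : 0 < 1 + Real.exp x := by positivity

lemma sfun_pos (α t : ℝ) : 0 < sfun α t := by
  unfold sfun; positivity

lemma sfun_le_one (α t : ℝ) : sfun α t ≤ 1 := by
  unfold sfun
  rw [inv_le_one_iff₀]
  right
  nlinarith [Real.exp_pos (α + t)]

lemma sfun_hasDeriv1 (α t : ℝ) :
    HasDerivAt (sfun α) (sfun α t ^ 2 - sfun α t) t := by
  have h1 : HasDerivAt (fun t => 1 + Real.exp (α + t)) (Real.exp (α + t)) t := by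
    have := (Real.hasDerivAt_exp (α + t)).comp t ((hasDerivAt_id t).const_add α)
    simpa using this.const_add 1
  have h2 := h1.inv (by positivity)
  have hne : (1 : ℝ) + Real.exp (α + t) ≠ 0 := by positivity
  exact h2.congr_deriv (by
    unfold sfun
    field_simp
    ring)

lemma sfun_hasDeriv2 (α t : ℝ) :
    HasDerivAt (fun t => sfun α t ^ 2 - sfun α t)
      ((2 * sfun α t - 1) * (sfun α t ^ 2 - sfun α t)) t := by
  have h := ((sfun_hasDeriv1 α t).pow 2).sub (sfun_hasDeriv1 α t)
  exact h.congr_deriv (by ring)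

lemma sfun_hasDeriv3 (α t : ℝ) :
    HasDerivAt (fun t => (2 * sfun α t - 1) * (sfun α t ^ 2 - sfun α t))
      ((2 * (sfun α t ^ 2 - sfun α t) + (2 * sfun α t - 1) ^ 2)
        * (sfun α t ^ 2 - sfun α t)) t := by
  have h := (((sfun_hasDeriv1 α t).const_mul 2).sub_const 1).mul (sfun_hasDeriv2 α t)
  exact h.congr_deriv (by ring)

lemma mvt_seg {F F' : ℝ → ℝ} (hF : ∀ x, HasDerivAt F (F' x) x) {t M : ℝ}
    (hM : ∀ x ∈ Set.uIcc 0 t, |F' x| ≤ M) : |F t - F 0| ≤ M * |t| := by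
  have h := Convex.norm_image_sub_le_of_norm_hasDerivWithin_le
    (f := F) (f' := F') (s := Set.uIcc 0 t)
    (fun x _ => (hF x).hasDerivWithinAt) (fun x hx => hM x hx)
    (convex_uIcc 0 t) Set.left_mem_uIcc Set.right_mem_uIcc
  simpa using h

lemma third_bound (α x : ℝ) :
    |(2 * (sfun α x ^ 2 - sfun α x) + (2 * sfun α x - 1) ^ 2)
        * (sfun α x ^ 2 - sfun α x)| ≤ 3 := by
  have h1 := sfun_pos α x
  have h2 := sfun_le_one α x
  rw [abs_mul]
  have ha : |sfun α x ^ 2 - sfun α x| ≤ 1 := by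
    rw [abs_le]; constructor <;> nlinarith
  have hb : |2 * (sfun α x ^ 2 - sfun α x) + (2 * sfun α x - 1) ^ 2| ≤ 3 := by
    rw [abs_le]; constructor <;> nlinarith
  calc |2 * (sfun α x ^ 2 - sfun α x) + (2 * sfun α x - 1) ^ 2|
        * |sfun α x ^ 2 - sfun α x| ≤ 3 * 1 := by
        apply mul_le_mul hb ha (abs_nonneg _) (by norm_num)
    _ = 3 := by norm_num

lemma B2 (α x : ℝ) :
    |(2 * sfun α x - 1) * (sfun α x ^ 2 - sfun α x)
      - (2 * sfun α 0 - 1) * (sfun α 0 ^ 2 - sfun α 0)| ≤ 3 * |x| := by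
  exact mvt_seg (sfun_hasDeriv3 α) (fun y _ => third_bound α y)

lemma B1 (α x : ℝ) :
    |(sfun α x ^ 2 - sfun α x) - (sfun α 0 ^ 2 - sfun α 0)
      - (2 * sfun α 0 - 1) * (sfun α 0 ^ 2 - sfun α 0) * x| ≤ 3 * |x| ^ 2 := by
  set a := sfun α 0 ^ 2 - sfun α 0 with ha
  set b := (2 * sfun α 0 - 1) * (sfun α 0 ^ 2 - sfun α 0) with hb
  have hF : ∀ y, HasDerivAt (fun y => (sfun α y ^ 2 - sfun α y) - a - b * y)
      ((2 * sfun α y - 1) * (sfun α y ^ 2 - sfun α y) - b) y := by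
    intro y
    have := ((sfun_hasDeriv2 α y).sub_const a).sub ((hasDerivAt_id y).const_mul b)
    exact this.congr_deriv (by ring)
  have hM : ∀ y ∈ Set.uIcc 0 x,
      |(2 * sfun α y - 1) * (sfun α y ^ 2 - sfun α y) - b| ≤ 3 * |x| := by
    intro y hy
    have hyx : |y| ≤ |x| := by
      rw [Set.uIcc_eq_union] at hy
      rcases hy with hy | hy <;> rw [abs_le] <;>
        simp only [Set.mem_Icc] at hy <;>
        constructor <;> cases' (abs_le.mp (le_refl |x|)) with _ _ <;>
        first
          | nlinarith [neg_abs_le x, le_abs_self x, hy.1, hy.2]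
    calc |(2 * sfun α y - 1) * (sfun α y ^ 2 - sfun α y) - b| ≤ 3 * |y| := B2 α y
      _ ≤ 3 * |x| := by linarith
  have h := mvt_seg hF hM (t := x)
  simp only [mul_zero, sub_zero] at h
  calc |(sfun α x ^ 2 - sfun α x) - a - b * x|
      = |((sfun α x ^ 2 - sfun α x) - a - b * x) - ((sfun α 0 ^ 2 - sfun α 0) - a)| := by
        rw [ha]; ring_nf
    _ ≤ 3 * |x| * |x| := h
    _ = 3 * |x| ^ 2 := by ring

lemma taylor_bound (α t : ℝ) :
    |sfun α t - (sfun α 0 + (sfun α 0 ^ 2 - sfun α 0) * t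
      + (2 * sfun α 0 - 1) * (sfun α 0 ^ 2 - sfun α 0) * t ^ 2 / 2)| ≤ 3 * |t| ^ 3 := by
  set a := sfun α 0 ^ 2 - sfun α 0 with ha
  set b := (2 * sfun α 0 - 1) * (sfun α 0 ^ 2 - sfun α 0) with hb
  have hF : ∀ y, HasDerivAt (fun y => sfun α y - (sfun α 0 + a * y + b * y ^ 2 / 2))
      ((sfun α y ^ 2 - sfun α y) - a - b * y) y := by
    intro y
    have h1 : HasDerivAt (fun y : ℝ => sfun α 0 + a * y + b * y ^ 2 / 2) (a + b * y) y := by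
      have h2 : HasDerivAt (fun y : ℝ => b * y ^ 2 / 2) (b * y) y := by
        have := ((hasDerivAt_pow 2 y).const_mul b).div_const 2
        exact this.congr_deriv (by push_cast; ring)
      have h3 : HasDerivAt (fun y : ℝ => sfun α 0 + a * y) a y := by
        simpa using ((hasDerivAt_id y).const_mul a).const_add (sfun α 0)
      exact h3.add h2
    have := (sfun_hasDeriv1 α y).sub h1
    exact this.congr_deriv (by ring)
  have hM : ∀ y ∈ Set.uIcc 0 t, |(sfun α y ^ 2 - sfun α y) - a - b * y| ≤ 3 * |t| ^ 2 := by
    intro y hy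
    have hyx : |y| ≤ |t| := by
      rw [Set.uIcc_eq_union] at hy
      rcases hy with hy | hy <;> rw [abs_le] <;>
        simp only [Set.mem_Icc] at hy <;>
        constructor <;>
        nlinarith [neg_abs_le t, le_abs_self t, hy.1, hy.2]
    calc |(sfun α y ^ 2 - sfun α y) - a - b * y| ≤ 3 * |y| ^ 2 := B1 α y
      _ ≤ 3 * |t| ^ 2 := by nlinarith [abs_nonneg y]
  have h := mvt_seg hF hM (t := t)
  have h0 : sfun α 0 - (sfun α 0 + a * 0 + b * 0 ^ 2 / 2) = 0 := by ring
  rw [h0, sub_zero] at h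
  calc |sfun α t - (sfun α 0 + a * t + b * t ^ 2 / 2)| ≤ 3 * |t| ^ 2 * |t| := h
    _ = 3 * |t| ^ 3 := by ring

lemma cube_bound {C μ z : ℝ} (hC : 0 < C) (hμ : |μ| ≤ C) :
    |μ + z| ^ 3 ≤ 4 * (C ^ 3 + 1 + z ^ 4) := by
  have hz : 0 ≤ |z| := abs_nonneg z
  have h1 : |μ + z| ≤ C + |z| := (abs_add_le _ _).trans (by linarith)
  have h2 : |μ + z| ^ 3 ≤ (C + |z|) ^ 3 := by
    apply pow_le_pow_left₀ (abs_nonneg _) h1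
  have h3 : (C + |z|) ^ 3 ≤ 4 * (C ^ 3 + |z| ^ 3) := by
    nlinarith [mul_nonneg (sq_nonneg (C - |z|)) (add_nonneg hC.le hz)]
  have hz4 : |z| ^ 4 = z ^ 4 := by
    rw [← abs_pow]; exact abs_of_nonneg (by positivity)
  have h4 : |z| ^ 3 ≤ 1 + z ^ 4 := by
    nlinarith [sq_nonneg (|z| ^ 2 - |z|), sq_nonneg (|z| - 1), sq_nonneg |z|]
  linarith

/-- Third-order expansion (6.3) of the expected logistic probability around
`β = 0`, uniform over bounded `α` and `μ`: with `ρ = e^α/(1 + e^α)`,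
`|E[(1 + exp(α + β(μ + Z)))⁻¹] − (1 − ρ)·{1 − ρβμ + ρ(ρ − ½)β²(μ² + E Z²)}| ≤ K|β|³`. -/
theorem expected_logistic_third_order_expansion
    {Ω : Type*} [MeasurableSpace Ω] (P : Measure Ω) [IsProbabilityMeasure P]
    (Z : Ω → ℝ) (hZmeas : Measurable Z)
    (hZmom : Integrable (fun ω => (Z ω) ^ 4) P)
    (hZmean : ∫ ω, Z ω ∂P = 0) :
    ∀ C : ℝ, 0 < C →
      ∃ K : ℝ, 0 < K ∧ ∃ β₀ ∈ Set.Ioc (0 : ℝ) 1,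
        ∀ α μ β : ℝ, |α| ≤ C → |μ| ≤ C → |β| ≤ β₀ →
          |(∫ ω, (1 + Real.exp (α + β * (μ + Z ω)))⁻¹ ∂P)
              - (1 - Real.exp α / (1 + Real.exp α))
                * (1 - (Real.exp α / (1 + Real.exp α)) * β * μ
                    + (Real.exp α / (1 + Real.exp α))
                      * (Real.exp α / (1 + Real.exp α) - 1 / 2)
                      * β ^ 2 * (μ ^ 2 + ∫ ω, (Z ω) ^ 2 ∂P))|
            ≤ K * |β| ^ 3 := by
  intro C hC
  set m4 := ∫ ω, (Z ω) ^ 4 ∂P with hm4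
  have hm4nn : 0 ≤ m4 := integral_nonneg fun ω => by positivity
  refine ⟨12 * (C ^ 3 + 1 + m4), by positivity, 1, ⟨one_pos, le_refl 1⟩, ?_⟩
  intro α μ β hα hμ hβ
  -- integrability of Z and Z^2
  have hdom : Integrable (fun ω => 1 + (Z ω) ^ 4) P := (integrable_const 1).add hZmom
  have hZ1 : Integrable Z P := by
    refine hdom.mono' hZmeas.aestronglyMeasurable (ae_of_all _ fun ω => ?_)
    have h : |Z ω| ≤ 1 + (Z ω) ^ 4 := by
      have h4 : |Z ω| ^ 4 = (Z ω) ^ 4 := by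
        rw [← abs_pow]; exact abs_of_nonneg (by positivity)
      nlinarith [sq_nonneg (|Z ω| ^ 2 - 1), sq_nonneg (|Z ω| - 1), abs_nonneg (Z ω)]
    simpa using h
  have hZ2 : Integrable (fun ω => (Z ω) ^ 2) P := by
    refine hdom.mono' (hZmeas.pow_const 2).aestronglyMeasurable (ae_of_all _ fun ω => ?_)
    have h : (Z ω) ^ 2 ≤ 1 + (Z ω) ^ 4 := by
      nlinarith [sq_nonneg ((Z ω) ^ 2 - 1)]
    have hnn : (0:ℝ) ≤ (Z ω) ^ 2 := by positivity
    simpa [abs_of_nonneg hnn] using h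
  -- notation
  set s0 := sfun α 0 with hs0
  set a := s0 ^ 2 - s0 with ha
  set b := (2 * s0 - 1) * (s0 ^ 2 - s0) with hb
  set c0 := s0 + a * β * μ + b * β ^ 2 * μ ^ 2 / 2 with hc0
  set c1 := a * β + b * β ^ 2 * μ with hc1
  set c2 := b * β ^ 2 / 2 with hc2
  set m2 := ∫ ω, (Z ω) ^ 2 ∂P with hm2
  -- integrability of the logistic integrand
  have hden : Continuous fun t : ℝ => 1 + Real.exp (α + t) := by
    continuity
  have hscont : Continuous (sfun α) := by
    unfold sfun
    exact hden.inv₀ fun t => ne_of_gt (by positivity)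
  have hinner : Measurable fun ω => β * (μ + Z ω) := ((hZmeas.const_add μ).const_mul β)
  have hf_int : Integrable (fun ω => sfun α (β * (μ + Z ω))) P := by
    refine (integrable_const 1).mono'
      ((hscont.measurable.comp hinner).aestronglyMeasurable) (ae_of_all _ fun ω => ?_)
    rw [Real.norm_eq_abs, abs_of_pos (sfun_pos _ _)]
    exact sfun_le_one _ _
  -- integrability of the Taylor polynomial
  have hP_int : Integrable (fun ω => c0 + c1 * Z ω + c2 * (Z ω) ^ 2) P := by
    exact ((integrable_const c0).add (hZ1.const_mul c1)).add (hZ2.const_mul c2)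
  -- integral of the Taylor polynomial
  have h1int : Integrable (fun ω => c0 + c1 * Z ω) P :=
    (integrable_const c0).add (hZ1.const_mul c1)
  have hP_val : ∫ ω, (c0 + c1 * Z ω + c2 * (Z ω) ^ 2) ∂P = c0 + c2 * m2 := by
    have e1 : ∫ ω, (c0 + c1 * Z ω + c2 * (Z ω) ^ 2) ∂P
        = (∫ ω, (c0 + c1 * Z ω) ∂P) + ∫ ω, c2 * (Z ω) ^ 2 ∂P :=
      integral_add h1int (hZ2.const_mul c2)
    have e2 : ∫ ω, (c0 + c1 * Z ω) ∂P = (∫ _ω, c0 ∂P) + ∫ ω, c1 * Z ω ∂P :=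
      integral_add (integrable_const c0) (hZ1.const_mul c1)
    rw [e1, e2, integral_const, integral_const_mul, integral_const_mul, hZmean]
    simp [hm2]
  -- the target equals c0 + c2 * m2
  have hE : (0:ℝ) < Real.exp α := Real.exp_pos α
  have h1E : (0:ℝ) < 1 + Real.exp α := by positivity
  have hs0val : s0 = (1 + Real.exp α)⁻¹ := by
    rw [hs0]; unfold sfun; rw [add_zero]
  have htarget :
      (1 - Real.exp α / (1 + Real.exp α))
        * (1 - (Real.exp α / (1 + Real.exp α)) * β * μ
            + (Real.exp α / (1 + Real.exp α))
              * (Real.exp α / (1 + Real.exp α) - 1 / 2)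
              * β ^ 2 * (μ ^ 2 + m2)) = c0 + c2 * m2 := by
    rw [hc0, hc2, ha, hb, hs0val]
    field_simp
    ring
  -- rewrite the LHS integral
  have hLHS : (∫ ω, (1 + Real.exp (α + β * (μ + Z ω)))⁻¹ ∂P)
      = ∫ ω, sfun α (β * (μ + Z ω)) ∂P := rfl
  rw [hLHS, htarget, ← hP_val]
  -- main estimate
  have hDint : Integrable (fun ω => 12 * |β| ^ 3 * (C ^ 3 + 1 + (Z ω) ^ 4)) P := by
    exact (((integrable_const (C ^ 3 + 1)).add hZmom).const_mul (12 * |β| ^ 3))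
  have hpt : ∀ ω, |sfun α (β * (μ + Z ω)) - (c0 + c1 * Z ω + c2 * (Z ω) ^ 2)|
      ≤ 12 * |β| ^ 3 * (C ^ 3 + 1 + (Z ω) ^ 4) := by
    intro ω
    have heq : c0 + c1 * Z ω + c2 * (Z ω) ^ 2
        = s0 + a * (β * (μ + Z ω)) + b * (β * (μ + Z ω)) ^ 2 / 2 := by
      rw [hc0, hc1, hc2]; ring
    rw [heq]
    calc |sfun α (β * (μ + Z ω)) - (s0 + a * (β * (μ + Z ω)) + b * (β * (μ + Z ω)) ^ 2 / 2)|
        ≤ 3 * |β * (μ + Z ω)| ^ 3 := taylor_bound α _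
      _ = 3 * |β| ^ 3 * |μ + Z ω| ^ 3 := by rw [abs_mul]; ring
      _ ≤ 3 * |β| ^ 3 * (4 * (C ^ 3 + 1 + (Z ω) ^ 4)) := by
          apply mul_le_mul_of_nonneg_left (cube_bound hC hμ) (by positivity)
      _ = 12 * |β| ^ 3 * (C ^ 3 + 1 + (Z ω) ^ 4) := by ring
  calc |(∫ ω, sfun α (β * (μ + Z ω)) ∂P) - ∫ ω, (c0 + c1 * Z ω + c2 * (Z ω) ^ 2) ∂P|
      = |∫ ω, (sfun α (β * (μ + Z ω)) - (c0 + c1 * Z ω + c2 * (Z ω) ^ 2)) ∂P| := by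
        rw [integral_sub hf_int hP_int]
    _ ≤ ∫ ω, |sfun α (β * (μ + Z ω)) - (c0 + c1 * Z ω + c2 * (Z ω) ^ 2)| ∂P := by
        simpa [Real.norm_eq_abs] using
          norm_integral_le_integral_norm (fun ω => sfun α (β * (μ + Z ω)) - (c0 + c1 * Z ω + c2 * (Z ω) ^ 2))
    _ ≤ ∫ ω, 12 * |β| ^ 3 * (C ^ 3 + 1 + (Z ω) ^ 4) ∂P := by
        refine integral_mono ((hf_int.sub hP_int).abs) hDint fun ω => hpt ω
    _ = 12 * |β| ^ 3 * (C ^ 3 + 1 + m4) := by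
        rw [integral_const_mul, integral_add (integrable_const _) hZmom, integral_const]
        simp [hm4]
    _ = 12 * (C ^ 3 + 1 + m4) * |β| ^ 3 := by ring
end

section
/- For every C > 0 there exist constants K > 0 and β₀ ∈ (0,1] such that for all α, μ with |α| ≤ C, |μ| ≤ C and all β with |β| ≤ β₀, writing ρ = e^α/(1 + e^α), one has |E[(μ + Z)·(1 + exp(α + β(μ + Z)))⁻¹] − (1 − ρ)·{μ − ρβ(μ² + E(Z²)) + ρ(ρ − ½)β²(μ³ + 3μ·E(Z²) + E(Z³))}| ≤ K|β|³. -/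
open MeasureTheory Real

noncomputable def sg (x : ℝ) : ℝ := (1 + Real.exp x)⁻¹

lemma sg_pos (x : ℝ) : 0 < sg x := by unfold sg; positivity

lemma sg_lt_one (x : ℝ) : sg x < 1 := by
  unfold sg
  rw [inv_lt_one_iff₀]
  right; linarith [Real.exp_pos x]

lemma sg_le_one (x : ℝ) : sg x ≤ 1 := (sg_lt_one x).le

lemma hasDeriv_sg (x : ℝ) : HasDerivAt sg ((sg x)^2 - sg x) x := by
  have h := ((Real.hasDerivAt_exp x).const_add 1).inv (by positivity)
  refine h.congr_deriv ?_
  unfold sg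
  have h0 : (1 + Real.exp x) ≠ 0 := by positivity
  field_simp
  ring

lemma hasDeriv_sg1 (x : ℝ) :
    HasDerivAt (fun y => (sg y)^2 - sg y) ((2 * sg x - 1) * ((sg x)^2 - sg x)) x := by
  have h := ((hasDeriv_sg x).pow 2).sub (hasDeriv_sg x)
  refine h.congr_deriv ?_
  ring

lemma hasDeriv_sg2 (x : ℝ) :
    HasDerivAt (fun y => (2 * sg y - 1) * ((sg y)^2 - sg y))
      (((sg x)^2 - sg x) * (6 * (sg x)^2 - 6 * sg x + 1)) x := by
  have h := (((hasDeriv_sg x).const_mul 2).sub_const 1).mul (hasDeriv_sg1 x)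
  refine h.congr_deriv ?_
  ring

lemma sg3_bound (x : ℝ) : |((sg x)^2 - sg x) * (6 * (sg x)^2 - 6 * sg x + 1)| ≤ 1/4 := by
  have h1 := sg_pos x
  have h2 := sg_lt_one x
  set u := (sg x)^2 - sg x with hu
  have hu1 : u ≤ 0 := by nlinarith
  have hu2 : -(1/4) ≤ u := by nlinarith [sq_nonneg (sg x - 1/2)]
  rw [abs_le]
  constructor
  · nlinarith [sq_nonneg (u + 1/12)]
  · nlinarith [mul_nonneg (by linarith : (0:ℝ) ≤ u + 1/4) (by linarith : (0:ℝ) ≤ -u)]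

lemma sg2_lip (a b : ℝ) :
    |(2 * sg b - 1) * ((sg b)^2 - sg b) - (2 * sg a - 1) * ((sg a)^2 - sg a)| ≤ (1/4) * |b - a| := by
  have := Convex.norm_image_sub_le_of_norm_hasDerivWithin_le
    (f := fun y => (2 * sg y - 1) * ((sg y)^2 - sg y))
    (f' := fun y => ((sg y)^2 - sg y) * (6 * (sg y)^2 - 6 * sg y + 1))
    (C := 1/4) (s := Set.univ)
    (fun x _ => (hasDeriv_sg2 x).hasDerivWithinAt)
    (fun x _ => by rw [Real.norm_eq_abs]; exact sg3_bound x)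
    convex_univ (Set.mem_univ a) (Set.mem_univ b)
  simpa using this

lemma sg_taylor (a t : ℝ) :
    |sg (a + t) - sg a - ((sg a)^2 - sg a) * t
      - (2 * sg a - 1) * ((sg a)^2 - sg a) / 2 * t^2| ≤ (1/4) * |t|^3 := by
  set D1 := (sg a)^2 - sg a with hD1
  set D2 := (2 * sg a - 1) * ((sg a)^2 - sg a) with hD2
  set g : ℝ → ℝ := fun s => sg (a + s) - sg a - D1 * s - D2 / 2 * s^2 with hg
  set g' : ℝ → ℝ := fun s => ((sg (a+s))^2 - sg (a+s)) - D1 - D2 * s with hg'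
  have hgd : ∀ s, HasDerivAt g (g' s) s := by
    intro s
    have h1 : HasDerivAt (fun s : ℝ => sg (a + s)) ((sg (a+s))^2 - sg (a+s)) s := by
      have := (hasDeriv_sg (a + s)).comp s ((hasDerivAt_id s).const_add a)
      exact this.congr_deriv (by simp)
    have := ((h1.sub_const (sg a)).sub ((hasDerivAt_id s).const_mul D1)).sub
      (((hasDerivAt_id s).pow 2).const_mul (D2/2))
    refine this.congr_deriv ?_
    simp [g']; ring
  have hg'd : ∀ s, HasDerivAt g' ((2 * sg (a+s) - 1) * ((sg (a+s))^2 - sg (a+s)) - D2) s := by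
    intro s
    have h1 : HasDerivAt (fun s : ℝ => (sg (a+s))^2 - sg (a+s))
        ((2 * sg (a+s) - 1) * ((sg (a+s))^2 - sg (a+s))) s := by
      have := (hasDeriv_sg1 (a + s)).comp s ((hasDerivAt_id s).const_add a)
      exact this.congr_deriv (by simp)
    have := (h1.sub_const D1).sub ((hasDerivAt_id s).const_mul D2)
    exact this.congr_deriv (by simp)
  have hb2 : ∀ s ∈ Set.uIcc (0:ℝ) t,
      |(2 * sg (a+s) - 1) * ((sg (a+s))^2 - sg (a+s)) - D2| ≤ (1/4) * |t| := by
    intro s hs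
    have h := sg2_lip a (a + s)
    have hst : |s| ≤ |t| := by
      rcases Set.mem_uIcc.mp hs with ⟨h1, h2⟩ | ⟨h1, h2⟩
      · rw [abs_of_nonneg h1]; exact le_trans h2 (le_abs_self t)
      · rw [abs_of_nonpos h2]; exact le_trans (neg_le_neg h1) (neg_le_abs t)
    simp only [add_sub_cancel_left] at h
    calc _ ≤ (1/4) * |s| := by rw [hD2]; exact h
    _ ≤ (1/4) * |t| := by linarith
  have hb1 : ∀ s ∈ Set.uIcc (0:ℝ) t, |g' s| ≤ (1/4) * |t| * |t| := by
    intro s hs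
    have h0 : g' 0 = 0 := by simp [g', hD1]
    have := Convex.norm_image_sub_le_of_norm_hasDerivWithin_le
      (f := g') (f' := fun s => (2 * sg (a+s) - 1) * ((sg (a+s))^2 - sg (a+s)) - D2)
      (C := (1/4) * |t|) (s := Set.uIcc (0:ℝ) t)
      (fun x hx => (hg'd x).hasDerivWithinAt)
      (fun x hx => by simpa using hb2 x hx)
      (convex_uIcc 0 t) Set.left_mem_uIcc hs
    rw [h0, sub_zero] at this
    have hst : |s| ≤ |t| := by
      rcases Set.mem_uIcc.mp hs with ⟨h1, h2⟩ | ⟨h1, h2⟩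
      · rw [abs_of_nonneg h1]; exact le_trans h2 (le_abs_self t)
      · rw [abs_of_nonpos h2]; exact le_trans (neg_le_neg h1) (neg_le_abs t)
    simp only [Real.norm_eq_abs, sub_zero] at this
    calc |g' s| ≤ (1/4) * |t| * |s| := this
    _ ≤ (1/4) * |t| * |t| := by nlinarith [abs_nonneg t]
  have hg0 : g 0 = 0 := by simp [g]
  have := Convex.norm_image_sub_le_of_norm_hasDerivWithin_le
    (f := g) (f' := g') (C := (1/4) * |t| * |t|) (s := Set.uIcc (0:ℝ) t)
    (fun x hx => (hgd x).hasDerivWithinAt)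
    (fun x hx => by simpa using hb1 x hx)
    (convex_uIcc 0 t) Set.left_mem_uIcc Set.right_mem_uIcc
  rw [hg0, sub_zero] at this
  simp only [Real.norm_eq_abs, sub_zero] at this
  have hgt : |g t| ≤ (1/4) * |t| * |t| * |t| := this
  calc |sg (a + t) - sg a - D1 * t - D2 / 2 * t^2| = |g t| := by simp [g]
  _ ≤ (1/4) * |t| * |t| * |t| := hgt
  _ = (1/4) * |t|^3 := by ring


set_option maxHeartbeats 1000000 in
/-- Third-order expansion (6.4) of the expected weighted logistic probability
around `β = 0`, uniform over bounded `α` and `μ`: with `ρ = e^α/(1 + e^α)`,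
`|E[(μ + Z)·(1 + exp(α + β(μ + Z)))⁻¹]
   − (1 − ρ)·{μ − ρβ(μ² + E Z²) + ρ(ρ − ½)β²(μ³ + 3μ·E Z² + E Z³)}| ≤ K|β|³`. -/
theorem expected_weighted_logistic_third_order_expansion
    {Ω : Type*} [MeasurableSpace Ω] (P : Measure Ω) [IsProbabilityMeasure P]
    (Z : Ω → ℝ) (hZmeas : Measurable Z)
    (hZmom : Integrable (fun ω => (Z ω) ^ 4) P)
    (hZmean : ∫ ω, Z ω ∂P = 0) :
    ∀ C : ℝ, 0 < C →
      ∃ K : ℝ, 0 < K ∧ ∃ β₀ ∈ Set.Ioc (0 : ℝ) 1,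
        ∀ α μ β : ℝ, |α| ≤ C → |μ| ≤ C → |β| ≤ β₀ →
          |(∫ ω, (μ + Z ω) * (1 + Real.exp (α + β * (μ + Z ω)))⁻¹ ∂P)
              - (1 - Real.exp α / (1 + Real.exp α))
                * (μ - (Real.exp α / (1 + Real.exp α)) * β
                        * (μ ^ 2 + ∫ ω, (Z ω) ^ 2 ∂P)
                    + (Real.exp α / (1 + Real.exp α))
                      * (Real.exp α / (1 + Real.exp α) - 1 / 2)
                      * β ^ 2
                      * (μ ^ 3 + 3 * μ * (∫ ω, (Z ω) ^ 2 ∂P) + ∫ ω, (Z ω) ^ 3 ∂P))|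
            ≤ K * |β| ^ 3 := by
  -- integrability of low moments
  have hgint4 : Integrable (fun ω => (Z ω) ^ 4 + 1) P := hZmom.add (integrable_const 1)
  have hmono : ∀ k : ℕ, 1 ≤ k → k ≤ 4 → Integrable (fun ω => (Z ω) ^ k) P := by
    intro k hk1 hk4
    refine hgint4.mono ((hZmeas.pow_const k).aestronglyMeasurable) (ae_of_all _ fun ω => ?_)
    rw [Real.norm_eq_abs, Real.norm_eq_abs, abs_pow]
    have h4 : (0:ℝ) ≤ Z ω ^ 4 := by positivity
    rw [abs_of_nonneg (by linarith : (0:ℝ) ≤ Z ω ^ 4 + 1)]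
    rcases le_or_gt (|Z ω|) 1 with h | h
    · have := pow_le_one₀ (abs_nonneg (Z ω)) h (n := k)
      linarith
    · have h1 : |Z ω| ^ k ≤ |Z ω| ^ 4 := pow_le_pow_right₀ h.le hk4
      have h5 : |Z ω| ^ 4 = Z ω ^ 4 := (pow_abs (Z ω) 4).trans (abs_of_nonneg h4)
      rw [h5] at h1
      linarith
  have hZ1 : Integrable Z P := by simpa using hmono 1 le_rfl (by norm_num)
  have hZ2 : Integrable (fun ω => (Z ω) ^ 2) P := hmono 2 (by norm_num) (by norm_num)
  have hZ3 : Integrable (fun ω => (Z ω) ^ 3) P := hmono 3 (by norm_num) (by norm_num)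
  have hm4 : (0:ℝ) ≤ ∫ ω, (Z ω) ^ 4 ∂P := integral_nonneg fun ω => by positivity
  intro C hC
  set m2 := ∫ ω, (Z ω) ^ 2 ∂P with hm2
  set m3 := ∫ ω, (Z ω) ^ 3 ∂P with hm3def
  set m4 := ∫ ω, (Z ω) ^ 4 ∂P with hm4def
  refine ⟨2 * (C ^ 4 + m4) + 1, by positivity, 1, by norm_num, ?_⟩
  intro α μ β hα hμ hβ
  set s := sg α with hs
  set D1 := s ^ 2 - s with hD1
  set D2 := (2 * s - 1) * (s ^ 2 - s) with hD2
  have hrho : Real.exp α / (1 + Real.exp α) = 1 - s := by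
    rw [hs]; unfold sg
    have h0 : (1 + Real.exp α) ≠ 0 := by positivity
    field_simp
    ring
  have hA : (1 - Real.exp α / (1 + Real.exp α))
                * (μ - (Real.exp α / (1 + Real.exp α)) * β * (μ ^ 2 + m2)
                    + (Real.exp α / (1 + Real.exp α))
                      * (Real.exp α / (1 + Real.exp α) - 1 / 2) * β ^ 2
                      * (μ ^ 3 + 3 * μ * m2 + m3))
      = s * μ + D1 * β * (μ ^ 2 + m2) + D2 / 2 * β ^ 2 * (μ ^ 3 + 3 * μ * m2 + m3) := by
    rw [hrho, hD1, hD2]; ring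
  -- integrability of pieces
  have hP1 : Integrable (fun ω => μ + Z ω) P := (integrable_const μ).add hZ1
  have hc1 : Integrable (fun ω => (2 * μ) * Z ω) P := hZ1.const_mul _
  have hc2 : Integrable (fun ω => μ ^ 2 + (2 * μ) * Z ω) P := (integrable_const _).add hc1
  have hP2 : Integrable (fun ω => (μ + Z ω) ^ 2) P := by
    have h : (fun ω => (μ + Z ω) ^ 2) = fun ω => (μ ^ 2 + (2 * μ) * Z ω) + (Z ω) ^ 2 := by
      funext ω; ring
    rw [h]; exact hc2.add hZ2
  have hd1 : Integrable (fun ω => (3 * μ ^ 2) * Z ω) P := hZ1.const_mul _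
  have hd2 : Integrable (fun ω => μ ^ 3 + (3 * μ ^ 2) * Z ω) P := (integrable_const _).add hd1
  have hd3 : Integrable (fun ω => (3 * μ) * (Z ω) ^ 2) P := hZ2.const_mul _
  have hd4 : Integrable (fun ω => (μ ^ 3 + (3 * μ ^ 2) * Z ω) + (3 * μ) * (Z ω) ^ 2) P :=
    hd2.add hd3
  have hP3 : Integrable (fun ω => (μ + Z ω) ^ 3) P := by
    have h : (fun ω => (μ + Z ω) ^ 3)
        = fun ω => ((μ ^ 3 + (3 * μ ^ 2) * Z ω) + (3 * μ) * (Z ω) ^ 2) + (Z ω) ^ 3 := by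
      funext ω; ring
    rw [h]; exact hd4.add hZ3
  -- integrability of the main integrand
  have hf0 : Integrable (fun ω => (μ + Z ω) * (1 + Real.exp (α + β * (μ + Z ω)))⁻¹) P := by
    refine hP1.abs.mono ?_ (ae_of_all _ fun ω => ?_)
    · exact (((measurable_const.add hZmeas).mul
        (((measurable_const.add ((measurable_const.add hZmeas).const_mul β)).exp.const_add 1).inv))).aestronglyMeasurable
    · rw [Real.norm_eq_abs, Real.norm_eq_abs, abs_mul, abs_abs]
      have hp := sg_pos (α + β * (μ + Z ω))
      have hl := sg_le_one (α + β * (μ + Z ω))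
      unfold sg at hp hl
      have h1 : |(1 + Real.exp (α + β * (μ + Z ω)))⁻¹| ≤ 1 := by
        rw [abs_of_nonneg hp.le]; exact hl
      nlinarith [abs_nonneg (μ + Z ω), abs_nonneg ((1 + Real.exp (α + β * (μ + Z ω)))⁻¹)]
  -- moments of μ + Z
  have I1 : ∫ ω, (μ + Z ω) ∂P = μ := by
    rw [integral_add (integrable_const μ) hZ1, hZmean, integral_const]
    simp
  have I2 : ∫ ω, (μ + Z ω) ^ 2 ∂P = μ ^ 2 + m2 := by
    have h : (fun ω => (μ + Z ω) ^ 2) = fun ω => (μ ^ 2 + (2 * μ) * Z ω) + (Z ω) ^ 2 := by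
      funext ω; ring
    rw [h, integral_add hc2 hZ2, integral_add (integrable_const _) hc1,
      integral_const_mul, hZmean, integral_const]
    simp [hm2]
  have I3 : ∫ ω, (μ + Z ω) ^ 3 ∂P = μ ^ 3 + 3 * μ * m2 + m3 := by
    have h : (fun ω => (μ + Z ω) ^ 3)
        = fun ω => ((μ ^ 3 + (3 * μ ^ 2) * Z ω) + (3 * μ) * (Z ω) ^ 2) + (Z ω) ^ 3 := by
      funext ω; ring
    rw [h, integral_add hd4 hZ3, integral_add hd2 hd3, integral_add (integrable_const _) hd1,
      integral_const_mul, integral_const_mul, hZmean, integral_const]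
    simp only [measure_univ, probReal_univ, ENNReal.toReal_one, smul_eq_mul, one_mul, mul_zero, add_zero, hm2, hm3def]
  -- integrability of the polynomial part and residual
  have hsum1 : Integrable (fun ω => s * (μ + Z ω)) P := hP1.const_mul s
  have hsum2 : Integrable (fun ω => D1 * β * (μ + Z ω) ^ 2) P := hP2.const_mul _
  have hsum3 : Integrable (fun ω => D2 / 2 * β ^ 2 * (μ + Z ω) ^ 3) P := hP3.const_mul _
  have hsum12 : Integrable (fun ω => s * (μ + Z ω) + D1 * β * (μ + Z ω) ^ 2) P := hsum1.add hsum2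
  have hsum : Integrable
      (fun ω => s * (μ + Z ω) + D1 * β * (μ + Z ω) ^ 2 + D2 / 2 * β ^ 2 * (μ + Z ω) ^ 3) P :=
    hsum12.add hsum3
  have hdiff : (∫ ω, (μ + Z ω) * (1 + Real.exp (α + β * (μ + Z ω)))⁻¹ ∂P)
      - (s * μ + D1 * β * (μ ^ 2 + m2) + D2 / 2 * β ^ 2 * (μ ^ 3 + 3 * μ * m2 + m3))
      = ∫ ω, ((μ + Z ω) * (1 + Real.exp (α + β * (μ + Z ω)))⁻¹
          - (s * (μ + Z ω) + D1 * β * (μ + Z ω) ^ 2 + D2 / 2 * β ^ 2 * (μ + Z ω) ^ 3)) ∂P := by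
    rw [integral_sub hf0 hsum, integral_add hsum12 hsum3, integral_add hsum1 hsum2,
      integral_const_mul, integral_const_mul, integral_const_mul, I1, I2, I3]
  -- pointwise bound on the residual
  have hRbound : ∀ ω, |(μ + Z ω) * (1 + Real.exp (α + β * (μ + Z ω)))⁻¹
      - (s * (μ + Z ω) + D1 * β * (μ + Z ω) ^ 2 + D2 / 2 * β ^ 2 * (μ + Z ω) ^ 3)|
      ≤ 2 * |β| ^ 3 * (C ^ 4 + (Z ω) ^ 4) := by
    intro ω
    have hfac : (μ + Z ω) * (1 + Real.exp (α + β * (μ + Z ω)))⁻¹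
        - (s * (μ + Z ω) + D1 * β * (μ + Z ω) ^ 2 + D2 / 2 * β ^ 2 * (μ + Z ω) ^ 3)
        = (μ + Z ω) * (sg (α + β * (μ + Z ω)) - s - D1 * (β * (μ + Z ω))
            - D2 / 2 * (β * (μ + Z ω)) ^ 2) := by
      unfold sg; ring
    rw [hfac, abs_mul]
    have h1 : |sg (α + β * (μ + Z ω)) - s - D1 * (β * (μ + Z ω))
        - D2 / 2 * (β * (μ + Z ω)) ^ 2| ≤ (1/4) * |β * (μ + Z ω)| ^ 3 := by
      rw [hD1, hD2, hs]
      exact sg_taylor α (β * (μ + Z ω))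
    have h2 := mul_le_mul_of_nonneg_left h1 (abs_nonneg (μ + Z ω))
    refine le_trans h2 ?_
    have ht3 : |β * (μ + Z ω)| ^ 3 = |β| ^ 3 * |μ + Z ω| ^ 3 := by
      rw [abs_mul, mul_pow]
    rw [ht3]
    have k1 : (μ + Z ω) ^ 4 ≤ 8 * (μ ^ 4 + (Z ω) ^ 4) := by
      nlinarith [sq_nonneg ((μ - Z ω) ^ 2), sq_nonneg (μ ^ 2 - (Z ω) ^ 2)]
    have k2 : μ ^ 4 ≤ C ^ 4 := by
      calc μ ^ 4 = |μ| ^ 4 := by rw [← abs_pow, abs_of_nonneg (by positivity)]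
      _ ≤ C ^ 4 := pow_le_pow_left₀ (abs_nonneg μ) hμ 4
    have key : |μ + Z ω| ^ 4 ≤ 8 * (C ^ 4 + (Z ω) ^ 4) := by
      have h4 : |μ + Z ω| ^ 4 = (μ + Z ω) ^ 4 := by
        rw [← abs_pow, abs_of_nonneg (by positivity)]
      rw [h4]; linarith
    calc |μ + Z ω| * ((1/4) * (|β| ^ 3 * |μ + Z ω| ^ 3))
        = (1/4) * |β| ^ 3 * |μ + Z ω| ^ 4 := by ring
      _ ≤ (1/4) * |β| ^ 3 * (8 * (C ^ 4 + (Z ω) ^ 4)) :=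
          mul_le_mul_of_nonneg_left key (by positivity)
      _ = 2 * |β| ^ 3 * (C ^ 4 + (Z ω) ^ 4) := by ring
  -- integrate the bound
  have hgint : Integrable (fun ω => 2 * |β| ^ 3 * (C ^ 4 + (Z ω) ^ 4)) P := by
    have : Integrable (fun ω => C ^ 4 + (Z ω) ^ 4) P := (integrable_const _).add hZmom
    exact this.const_mul _
  have hbig : |∫ ω, ((μ + Z ω) * (1 + Real.exp (α + β * (μ + Z ω)))⁻¹
      - (s * (μ + Z ω) + D1 * β * (μ + Z ω) ^ 2 + D2 / 2 * β ^ 2 * (μ + Z ω) ^ 3)) ∂P|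
      ≤ 2 * |β| ^ 3 * (C ^ 4 + m4) := by
    have hn := norm_integral_le_of_norm_le hgint (ae_of_all _ fun ω => by
      rw [Real.norm_eq_abs]; exact hRbound ω)
    rw [Real.norm_eq_abs] at hn
    refine le_trans hn (le_of_eq ?_)
    rw [integral_const_mul, integral_add (integrable_const _) hZmom, integral_const]
    simp [hm4def]
  rw [hA, hdiff]
  refine le_trans hbig ?_
  have h3 : (0:ℝ) ≤ |β| ^ 3 := by positivity
  nlinarith [h3]
end
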